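/- Both B(ℓ_1), the space of bounded linear operators on ℓ_1, and B(c_0), the space of bounded linear operators on c_0, have the ball-covering property. -/

import Mathlib

open Metric ZeroAtInfty Filter
open scoped ENNReal

/-- A normed space has the ball-covering property (BCP) if there is a countable family of
closed balls, none containing the origin (`0 < r n < ‖c n‖`), covering the unit sphere. -/
def HasBCP (X : Type*) [NormedAddCommGroup X] : Prop :=
  ∃ (c : ℕ → X) (r : ℕ → ℝ),
    (∀ n, 0 < r n ∧ r n < ‖c n‖) ∧
    sphere (0 : X) 1 ⊆ ⋃ n, closedBall (c n) (r n)

/-- The strong ball-covering property: the radii are uniformly bounded above. -/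
def HasSBCP (X : Type*) [NormedAddCommGroup X] : Prop :=
  ∃ (c : ℕ → X) (r : ℕ → ℝ),
    (∀ n, 0 < r n ∧ r n < ‖c n‖) ∧
    (∃ M : ℝ, ∀ n, r n ≤ M) ∧
    sphere (0 : X) 1 ⊆ ⋃ n, closedBall (c n) (r n)

/-- The uniform ball-covering property: strong BCP together with a closed ball around the
origin disjoint from all the balls of the covering. -/
def HasUBCP (X : Type*) [NormedAddCommGroup X] : Prop :=
  ∃ (c : ℕ → X) (r : ℕ → ℝ),
    (∀ n, 0 < r n ∧ r n < ‖c n‖) ∧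
    (∃ M : ℝ, ∀ n, r n ≤ M) ∧
    (∃ ρ : ℝ, 0 < ρ ∧ ∀ n, Disjoint (closedBall (0 : X) ρ) (closedBall (c n) (r n))) ∧
    sphere (0 : X) 1 ⊆ ⋃ n, closedBall (c n) (r n)

/-- A topological space has a countable π-basis if there is a countable family of nonempty
open sets such that every nonempty open set contains a member of the family. -/
def HasCountablePiBasis (K : Type*) [TopologicalSpace K] : Prop :=
  ∃ B : Set (Set K), B.Countable ∧ (∀ U ∈ B, IsOpen U ∧ U.Nonempty) ∧
    ∀ V : Set K, IsOpen V → V.Nonempty → ∃ U ∈ B, U ⊆ V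

noncomputable section BCPProof

lemma bcp_aux {X : Type*} [NormedAddCommGroup X] {ι : Type*} [Countable ι] [Nonempty ι]
    (c : ι → X) (r : ι → ℝ) (h1 : ∀ i, 0 < r i ∧ r i < ‖c i‖)
    (h2 : sphere (0:X) 1 ⊆ ⋃ i, closedBall (c i) (r i)) : HasBCP X := by
  obtain ⟨f, hf⟩ := exists_surjective_nat ι
  refine ⟨c ∘ f, r ∘ f, fun n => h1 (f n), fun x hx => ?_⟩
  obtain ⟨i, hxi⟩ := Set.mem_iUnion.1 (h2 hx)
  obtain ⟨n, rfl⟩ := hf i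
  exact Set.mem_iUnion.2 ⟨n, hxi⟩

abbrev X1 := lp (fun _ : ℕ => ℝ) 1

lemma X1.summable (x : X1) : Summable (fun j => |x j|) := by
  have h := lp.memℓp x
  rw [memℓp_gen_iff (by norm_num : (0:ℝ) < (1:ℝ≥0∞).toReal)] at h
  simpa using h

lemma X1.norm_eq (x : X1) : ‖x‖ = ∑' j, |x j| := by
  have h := lp.norm_eq_tsum_rpow (by norm_num : (0:ℝ) < (1:ℝ≥0∞).toReal) x
  simpa using h

def coordL1 (k : ℕ) : X1 →L[ℝ] ℝ :=
  LinearMap.mkContinuous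
    { toFun := fun x => x k
      map_add' := fun x y => by simp [lp.coeFn_add]
      map_smul' := fun c x => by simp [lp.coeFn_smul] }
    1 (fun x => by
      show ‖x k‖ ≤ 1 * ‖x‖
      simpa using lp.norm_apply_le_norm (by norm_num : (1:ℝ≥0∞) ≠ 0) x k)

@[simp] lemma coordL1_apply (k : ℕ) (x : X1) : coordL1 k x = x k := rfl

def eL1 (k : ℕ) : X1 := lp.single 1 k (1:ℝ)

lemma eL1_norm (k : ℕ) : ‖eL1 k‖ = 1 := by
  have := lp.norm_single (E := fun _ : ℕ => ℝ) (p := 1) (by norm_num) k (1:ℝ)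
  simpa [eL1] using this

lemma eL1_apply_self (k : ℕ) : eL1 k k = 1 := lp.single_apply_self 1 k 1

lemma eL1_apply_ne (k : ℕ) {j : ℕ} (h : j ≠ k) : eL1 k j = 0 := lp.single_apply_ne 1 k 1 h

lemma X1.hasSum_smul_e (x : X1) : HasSum (fun k => x k • eL1 k) x := by
  have h := lp.hasSum_single (p := 1) (by norm_num) x
  convert h using 2 with k
  rw [eL1, ← lp.single_smul]
  norm_num

lemma opNorm_le_of_cols (S : X1 →L[ℝ] X1) {r : ℝ} (hr : 0 ≤ r)
    (h : ∀ k, ‖S (eL1 k)‖ ≤ r) : ‖S‖ ≤ r := by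
  refine S.opNorm_le_bound hr fun x => ?_
  have hs : HasSum (fun k => x k • S (eL1 k)) (S x) := by
    have := (X1.hasSum_smul_e x).mapL S
    simpa using this
  have hsum : Summable (fun k => ‖x k • S (eL1 k)‖) := by
    refine Summable.of_nonneg_of_le (fun k => norm_nonneg _) (fun k => ?_)
      ((X1.summable x).mul_right r)
    rw [norm_smul]
    exact mul_le_mul_of_nonneg_left (h k) (norm_nonneg _)
  calc ‖S x‖ = ‖∑' k, x k • S (eL1 k)‖ := by rw [hs.tsum_eq]
    _ ≤ ∑' k, ‖x k • S (eL1 k)‖ := norm_tsum_le_tsum_norm hsum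
    _ ≤ ∑' k, |x k| * r := by
        refine Summable.tsum_le_tsum (fun k => ?_) hsum ((X1.summable x).mul_right r)
        rw [norm_smul]
        exact mul_le_mul_of_nonneg_left (h k) (norm_nonneg _) |>.trans (by simp)
    _ = (∑' k, |x k|) * r := tsum_mul_right
    _ = r * ‖x‖ := by rw [X1.norm_eq, mul_comm]


def fsq (q : ℕ →₀ ℚ) : X1 :=
  ⟨fun j => (q j : ℝ), memℓp_gen (by
    apply summable_of_ne_finset_zero (s := q.support)
    intro j hj
    rw [Finsupp.notMem_support_iff.1 hj]
    norm_num)⟩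

@[simp] lemma fsq_apply (q : ℕ →₀ ℚ) (j : ℕ) : fsq q j = (q j : ℝ) := rfl

lemma fsq_dense (x : X1) {ε : ℝ} (hε : 0 < ε) : ∃ q : ℕ →₀ ℚ, ‖x - fsq q‖ < ε := by
  have hsum := X1.summable x
  have htail := tendsto_tsum_compl_atTop_zero (fun j => |x j|)
  have : ∀ᶠ s : Finset ℕ in Filter.atTop, ∑' j : {j // j ∉ s}, |x (j:ℕ)| < ε/2 := by
    have := htail (Metric.ball_mem_nhds 0 (by positivity : (0:ℝ) < ε/2))
    filter_upwards [this] with s hs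
    simp only [Set.mem_preimage, Metric.mem_ball, Real.dist_eq, sub_zero] at hs
    exact lt_of_abs_lt hs
  obtain ⟨s, hs⟩ := this.exists
  have hδ : (0:ℝ) < ε/(2*(s.card+1)) := by positivity
  set δ := ε/(2*(s.card+1)) with hδdef
  choose g hg using fun j : ℕ => exists_rat_near (x j) hδ
  set q : ℕ →₀ ℚ := Finsupp.onFinset s (fun j => if j ∈ s then g j else 0)
    (fun j h => by by_contra hj; simp [hj] at h) with hq
  refine ⟨q, ?_⟩
  have hqin : ∀ j ∈ s, (q j : ℝ) = (g j : ℝ) := by intro j hj; simp [hq, hj]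
  have hqout : ∀ j, j ∉ s → (q j : ℝ) = 0 := by intro j hj; simp [hq, hj]
  have hcoe : ∀ j, (x - fsq q) j = x j - (q j : ℝ) := by
    intro j; simp [lp.coeFn_sub, Pi.sub_apply]
  have hsub : Summable fun j => |(x - fsq q) j| := X1.summable _
  rw [X1.norm_eq, ← Summable.sum_add_tsum_subtype_compl hsub s]
  have h1 : ∑ j ∈ s, |(x - fsq q) j| ≤ s.card * δ := by
    have := Finset.sum_le_card_nsmul s (fun j => |(x - fsq q) j|) δ (fun j hj => by
      show |(x - fsq q) j| ≤ δ
      rw [hcoe j, hqin j hj]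
      exact le_of_lt (hg j))
    simpa [nsmul_eq_mul] using this
  have h2 : ∑' j : {j // j ∉ s}, |(x - fsq q) (j:ℕ)| < ε/2 := by
    have : ∀ j : {j // j ∉ s}, |(x - fsq q) (j:ℕ)| = |x (j:ℕ)| := by
      intro j
      rw [hcoe, hqout _ j.2, sub_zero]
    rw [tsum_congr this]
    exact hs
  have h3 : (s.card : ℝ) * δ ≤ ε/2 := by
    rw [hδdef]
    have hc : (0:ℝ) ≤ s.card := Nat.cast_nonneg _
    have h2 : (0:ℝ) < 2*(s.card+1) := by positivity
    rw [mul_div_assoc', div_le_div_iff₀ h2 two_pos]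
    nlinarith
  linarith

def centerL1 (k : ℕ) (u : X1) : X1 →L[ℝ] X1 := (coordL1 k).smulRight ((3:ℝ) • u)

lemma centerL1_apply (k : ℕ) (u : X1) (x : X1) : centerL1 k u x = x k • ((3:ℝ) • u) := rfl

lemma centerL1_norm_ge (k : ℕ) (u : X1) : 3 * ‖u‖ ≤ ‖centerL1 k u‖ := by
  have h := (centerL1 k u).le_opNorm (eL1 k)
  rw [centerL1_apply, eL1_apply_self, one_smul, eL1_norm, mul_one, norm_smul] at h
  simpa using h

lemma exists_col (T : X1 →L[ℝ] X1) (hT : ‖T‖ = 1) : ∃ k, 1/2 < ‖T (eL1 k)‖ := by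
  by_contra h
  push_neg at h
  have := opNorm_le_of_cols T (by norm_num) h
  rw [hT] at this; norm_num at this

lemma l1_half : HasBCP (X1 →L[ℝ] X1) := by
  classical
  set D : Set X1 := {u | (∃ q, u = fsq q) ∧ 3/8 < ‖u‖} with hD
  have hDc : D.Countable := by
    have : D ⊆ Set.range fsq := fun u hu => by obtain ⟨⟨q, rfl⟩, _⟩ := hu; exact ⟨q, rfl⟩
    exact (Set.countable_range fsq).mono this
  have hDne : D.Nonempty := by
    refine ⟨fsq (Finsupp.single 0 1), ⟨_, rfl⟩, ?_⟩
    have h1 : ‖fsq (Finsupp.single 0 1)‖ = 1 := by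
      rw [X1.norm_eq]
      rw [tsum_eq_single 0 (fun j hj => by simp [Finsupp.single_apply, hj, Ne.symm hj])]
      simp
    rw [h1]; norm_num
  have : Countable D := hDc.to_subtype
  have : Nonempty D := hDne.to_subtype
  refine bcp_aux (ι := ℕ × D) (fun i => centerL1 i.1 i.2.1)
    (fun i => 3 * ‖i.2.1‖ - 1/8) (fun i => ?_) ?_
  · obtain ⟨k, u, hu⟩ := i
    constructor
    · have := hu.2; linarith
    · have := centerL1_norm_ge k u; linarith
  · intro T hT
    rw [mem_sphere_zero_iff_norm] at hT
    obtain ⟨k, hk⟩ := exists_col T hT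
    obtain ⟨q, hq⟩ := fsq_dense (T (eL1 k)) (by norm_num : (0:ℝ) < 1/8)
    set u := fsq q with hu
    have hunorm : 3/8 < ‖u‖ := by
      have h1 : ‖T (eL1 k)‖ - ‖u‖ ≤ ‖T (eL1 k) - u‖ := norm_sub_norm_le _ _
      linarith
    refine Set.mem_iUnion.2 ⟨(k, ⟨u, ⟨q, rfl⟩, hunorm⟩), ?_⟩
    rw [mem_closedBall_iff_norm]
    refine opNorm_le_of_cols _ (by linarith) fun m => ?_
    rcases eq_or_ne m k with rfl | hm
    · rw [ContinuousLinearMap.sub_apply, centerL1_apply, eL1_apply_self, one_smul]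
      have : T (eL1 m) - (3:ℝ) • u = (T (eL1 m) - u) - (2:ℝ) • u := by module
      rw [this]
      have := norm_sub_le (T (eL1 m) - u) ((2:ℝ) • u)
      rw [norm_smul] at this
      simp only [Real.norm_ofNat] at this
      linarith
    · rw [ContinuousLinearMap.sub_apply, centerL1_apply, eL1_apply_ne m hm.symm, zero_smul,
        sub_zero]
      have h1 : ‖T (eL1 m)‖ ≤ 1 := by
        have := T.le_opNorm (eL1 m)
        rw [hT, eL1_norm] at this; simpa using this
      linarith
abbrev Y0 := C₀(ℕ, ℝ)

def mkY (f : ℕ → ℝ) (h : Tendsto f atTop (nhds 0)) : Y0 :=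
  ⟨⟨f, continuous_of_discreteTopology⟩, by
    rwa [cocompact_eq_cofinite, Nat.cofinite_eq_atTop]⟩

@[simp] lemma mkY_apply (f : ℕ → ℝ) (h) (j : ℕ) : mkY f h j = f j := rfl

lemma Y0.abs_apply_le (z : Y0) (m : ℕ) : |z m| ≤ ‖z‖ := by
  rw [← ZeroAtInftyContinuousMap.norm_toBCF_eq_norm]
  exact z.toBCF.norm_coe_le_norm m

lemma Y0.norm_le {z : Y0} {M : ℝ} (hM : 0 ≤ M) (h : ∀ m, |z m| ≤ M) : ‖z‖ ≤ M := by
  rw [← ZeroAtInftyContinuousMap.norm_toBCF_eq_norm]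
  exact (BoundedContinuousFunction.norm_le hM).2 h

def deltaY (i : ℕ) : Y0 :=
  mkY (fun j => if j = i then 1 else 0) (by
    apply Filter.Tendsto.congr' (f₁ := fun _ => (0:ℝ))
    · filter_upwards [Filter.eventually_gt_atTop i] with j hj
      simp [Nat.ne_of_gt hj |>.symm, hj.ne']
    · exact tendsto_const_nhds)

@[simp] lemma deltaY_apply (i j : ℕ) : deltaY i j = if j = i then 1 else 0 := rfl

lemma deltaY_norm (i : ℕ) : ‖deltaY i‖ = 1 := by
  refine le_antisymm (Y0.norm_le zero_le_one fun m => ?_) ?_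
  · by_cases h : m = i <;> simp [h]
  · have := Y0.abs_apply_le (deltaY i) i
    simpa using this

lemma Y0.coe_finset_sum (s : Finset ℕ) (f : ℕ → Y0) (m : ℕ) :
    (∑ j ∈ s, f j) m = ∑ j ∈ s, f j m := by
  classical
  induction s using Finset.induction with
  | empty => simp [ZeroAtInftyContinuousMap.coe_zero]
  | insert a s' hj ih =>
                    rw [Finset.sum_insert hj, Finset.sum_insert hj,
                      ZeroAtInftyContinuousMap.coe_add]
                    simp [ih]

lemma Y0.norm_smul_le (r : ℝ) (z : Y0) : ‖r • z‖ ≤ |r| * ‖z‖ := by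
  refine Y0.norm_le (by positivity) fun m => ?_
  rw [ZeroAtInftyContinuousMap.coe_smul, Pi.smul_apply, smul_eq_mul, abs_mul]
  exact mul_le_mul_of_nonneg_left (Y0.abs_apply_le z m) (abs_nonneg r)

lemma Y0.norm_smul (r : ℝ) (z : Y0) : ‖r • z‖ = |r| * ‖z‖ := by
  rcases eq_or_ne r 0 with rfl | hr
  · simp only [abs_zero, zero_mul]
    have h0 : (0:ℝ) • z = 0 := zero_smul ℝ z
    rw [h0, norm_zero]
  · refine le_antisymm (Y0.norm_smul_le r z) ?_
    have h1 : ‖z‖ ≤ |r⁻¹| * ‖r • z‖ := by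
      have := Y0.norm_smul_le r⁻¹ (r • z)
      rwa [smul_smul, inv_mul_cancel₀ hr, one_smul] at this
    rw [abs_inv] at h1
    rw [mul_comm]
    rw [← le_div_iff₀ (by positivity : (0:ℝ) < |r|)]
    rwa [div_eq_mul_inv, mul_comm]

lemma Y0.hasSum_delta (z : Y0) : HasSum (fun j => z j • deltaY j) z := by
  rw [HasSum, SummationFilter.unconditional_filter, Metric.tendsto_atTop]
  intro ε hε
  have hz : ∀ᶠ j in cofinite, |z j| < ε/2 := by
    have h0 := z.zero_at_infty'
    rw [cocompact_eq_cofinite] at h0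
    have := h0 (Metric.ball_mem_nhds 0 (by positivity : (0:ℝ) < ε/2))
    filter_upwards [this] with j hj
    simpa [Real.dist_eq] using hj
  have hfin : {j | ¬ |z j| < ε/2}.Finite := hz
  refine ⟨hfin.toFinset, fun s hs => ?_⟩
  rw [dist_eq_norm]
  refine lt_of_le_of_lt (Y0.norm_le (by positivity) fun m => ?_) (half_lt_self hε)
  rw [ZeroAtInftyContinuousMap.coe_sub, Pi.sub_apply, Y0.coe_finset_sum]
  have hsum : ∑ j ∈ s, (z j • deltaY j) m = if m ∈ s then z m else 0 := by
    rw [Finset.sum_congr rfl (fun j _ => by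
      show (z j • deltaY j) m = z j * (if m = j then 1 else 0)
      simp [mul_comm])]
    simp only [mul_ite, mul_one, mul_zero]
    rw [Finset.sum_ite_eq s m z]
  rw [hsum]
  by_cases hm : m ∈ s
  · simp only [hm, if_true, sub_self, abs_zero]
    positivity
  · simp only [hm, if_false, zero_sub, abs_neg]
    have : m ∉ hfin.toFinset := fun hmem => hm (hs hmem)
    rw [Set.Finite.mem_toFinset, Set.mem_setOf_eq, not_not] at this
    exact le_of_lt this


lemma pair_summable (u : X1) (z : Y0) : Summable (fun j => u j * z j) := by
  apply Summable.of_norm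
  refine Summable.of_nonneg_of_le (fun j => norm_nonneg _) (fun j => ?_)
    ((X1.summable u).mul_right ‖z‖)
  rw [Real.norm_eq_abs, abs_mul]
  exact mul_le_mul_of_nonneg_left (Y0.abs_apply_le z j) (abs_nonneg _)

lemma pair_bound (u : X1) (z : Y0) : |∑' j, u j * z j| ≤ ‖u‖ * ‖z‖ := by
  have h1 : ‖∑' j, u j * z j‖ ≤ ∑' j, ‖u j * z j‖ :=
    norm_tsum_le_tsum_norm (by
      simpa only [Real.norm_eq_abs] using (pair_summable u z).abs)
  simp only [Real.norm_eq_abs] at h1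
  calc |∑' j, u j * z j| ≤ ∑' j, |u j * z j| := h1
    _ ≤ ∑' j, |u j| * ‖z‖ := by
        refine Summable.tsum_le_tsum (fun j => ?_) (pair_summable u z).abs ((X1.summable u).mul_right ‖z‖)
        rw [abs_mul]
        exact mul_le_mul_of_nonneg_left (Y0.abs_apply_le z j) (abs_nonneg _)
    _ = (∑' j, |u j|) * ‖z‖ := tsum_mul_right
    _ = ‖u‖ * ‖z‖ := by rw [X1.norm_eq]

def Pu (u : X1) : Y0 →L[ℝ] ℝ :=
  LinearMap.mkContinuous
    { toFun := fun z => ∑' j, u j * z j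
      map_add' := fun z w => by
        show ∑' j, u j * (z + w) j = (∑' j, u j * z j) + ∑' j, u j * w j
        rw [tsum_congr (fun j => by
          rw [ZeroAtInftyContinuousMap.coe_add, Pi.add_apply] ; ring_nf :
          ∀ j, u j * (z + w) j = u j * z j + u j * w j),
          Summable.tsum_add (pair_summable u z) (pair_summable u w)]
      map_smul' := fun c z => by
        show ∑' j, u j * (c • z) j = c • ∑' j, u j * z j
        rw [smul_eq_mul, tsum_congr (fun j => by
          rw [ZeroAtInftyContinuousMap.coe_smul, Pi.smul_apply, smul_eq_mul] ; ring_nf :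
          ∀ j, u j * (c • z) j = c * (u j * z j)), tsum_mul_left] }
    ‖u‖ (fun z => by simpa using pair_bound u z)

@[simp] lemma Pu_apply (u : X1) (z : Y0) : Pu u z = ∑' j, u j * z j := rfl

lemma Pu_sub_apply (a u : X1) (z : Y0) : Pu a z - Pu u z = Pu (a - u) z := by
  simp only [Pu_apply]
  rw [← Summable.tsum_sub (pair_summable a z) (pair_summable u z)]
  congr 1; funext j
  rw [lp.coeFn_sub, Pi.sub_apply]; ring

def coordY (m : ℕ) : Y0 →L[ℝ] ℝ :=
  LinearMap.mkContinuous
    { toFun := fun z => z m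
      map_add' := fun z w => by
        show (z + w) m = z m + w m
        rw [ZeroAtInftyContinuousMap.coe_add, Pi.add_apply]
      map_smul' := fun c z => by
        show (c • z) m = c • z m
        rw [ZeroAtInftyContinuousMap.coe_smul, Pi.smul_apply] }
    1 (fun z => by simpa using Y0.abs_apply_le z m)

@[simp] lemma coordY_apply (m : ℕ) (z : Y0) : coordY m z = z m := rfl

/-- sign vector on a finset, for a coefficient function `v`. -/
def signY (v : ℕ → ℝ) (s : Finset ℕ) : Y0 := ∑ j ∈ s, Real.sign (v j) • deltaY j

lemma signY_apply (v : ℕ → ℝ) (s : Finset ℕ) (m : ℕ) :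
    signY v s m = if m ∈ s then Real.sign (v m) else 0 := by
  rw [signY, Y0.coe_finset_sum]
  rw [Finset.sum_congr rfl (fun j _ => by
    show (Real.sign (v j) • deltaY j) m = if m = j then Real.sign (v j) else 0
    simp [mul_comm])]
  rw [Finset.sum_ite_eq s m _]

lemma signY_norm_le (v : ℕ → ℝ) (s : Finset ℕ) : ‖signY v s‖ ≤ 1 := by
  refine Y0.norm_le zero_le_one fun m => ?_
  rw [signY_apply]
  by_cases hm : m ∈ s
  · simp only [hm, if_true]
    rcases lt_trichotomy (v m) 0 with h | h | h
    · rw [Real.sign_of_neg h]; norm_num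
    · rw [h, Real.sign_zero]; norm_num
    · rw [Real.sign_of_pos h]; norm_num
  · simp [hm]

lemma mySign_mul_self (x : ℝ) : Real.sign x * x = |x| := by
  rcases lt_trichotomy x 0 with h | h | h
  · rw [Real.sign_of_neg h, abs_of_neg h]; ring
  · simp [h]
  · rw [Real.sign_of_pos h, abs_of_pos h]; ring

lemma Pu_signY (u : X1) (s : Finset ℕ) : Pu u (signY (fun j => u j) s) = ∑ j ∈ s, |u j| := by
  have hz : ∀ m, (signY (fun j => u j) s) m = if m ∈ s then Real.sign (u m) else 0 :=
    signY_apply _ s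
  rw [Pu_apply]
  rw [tsum_eq_sum (s := s) (fun j hj => by rw [hz j, if_neg hj, mul_zero])]
  refine Finset.sum_congr rfl fun j hj => ?_
  rw [hz j, if_pos hj, mul_comm, mySign_mul_self]


lemma rep_lemma (phi : Y0 →L[ℝ] ℝ) : ∃ A : X1, (∀ z, phi z = Pu A z) ∧ ‖A‖ ≤ ‖phi‖ := by
  set a : ℕ → ℝ := fun j => phi (deltaY j) with ha
  have hpart : ∀ s : Finset ℕ, ∑ j ∈ s, |a j| ≤ ‖phi‖ := by
    intro s
    have hsign : phi (signY a s) = ∑ j ∈ s, |a j| := by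
      rw [signY, map_sum]
      refine Finset.sum_congr rfl fun j hj => ?_
      rw [map_smul, smul_eq_mul, mySign_mul_self]
    have h2 : |phi (signY a s)| ≤ ‖phi‖ * ‖signY a s‖ := by
      simpa [Real.norm_eq_abs] using phi.le_opNorm (signY a s)
    have h3 := signY_norm_le a s
    calc ∑ j ∈ s, |a j| = phi (signY a s) := hsign.symm
      _ ≤ |phi (signY a s)| := le_abs_self _
      _ ≤ ‖phi‖ * ‖signY a s‖ := h2
      _ ≤ ‖phi‖ := by nlinarith [norm_nonneg phi]
  have hsummable : Summable fun j => |a j| :=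
    summable_of_sum_range_le (fun n => abs_nonneg _) (fun n => hpart (Finset.range n))
  have hmem : Memℓp a 1 := memℓp_gen (by simpa using hsummable)
  refine ⟨⟨a, hmem⟩, fun z => ?_, ?_⟩
  · have h1 : HasSum (fun j => phi (z j • deltaY j)) (phi z) := (Y0.hasSum_delta z).mapL phi
    have h2 : ∀ j, phi (z j • deltaY j) = a j * z j := fun j => by
      rw [map_smul, smul_eq_mul, ha]; ring
    rw [Pu_apply, ← h1.tsum_eq, tsum_congr h2]
  · rw [X1.norm_eq]
    exact Summable.tsum_le_of_sum_le hsummable hpart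

lemma Pu_opNorm_ge (u : X1) : ‖u‖ ≤ ‖Pu u‖ := by
  have h : ∀ s : Finset ℕ, ∑ j ∈ s, |u j| ≤ ‖Pu u‖ := by
    intro s
    have h1 : |Pu u (signY (fun j => u j) s)| ≤ ‖Pu u‖ * ‖signY (fun j => u j) s‖ := by
      simpa [Real.norm_eq_abs] using (Pu u).le_opNorm (signY (fun j => u j) s)
    have h2 := signY_norm_le (fun j => u j) s
    calc ∑ j ∈ s, |u j| = Pu u (signY (fun j => u j) s) := (Pu_signY u s).symm
      _ ≤ |Pu u (signY (fun j => u j) s)| := le_abs_self _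
      _ ≤ ‖Pu u‖ := by nlinarith [norm_nonneg (Pu u)]
  rw [X1.norm_eq]
  exact Summable.tsum_le_of_sum_le (X1.summable u) h

def centerY (i : ℕ) (u : X1) : Y0 →L[ℝ] Y0 := (Pu u).smulRight ((3:ℝ) • deltaY i)

lemma centerY_apply (i : ℕ) (u : X1) (z : Y0) :
    centerY i u z = (Pu u z) • ((3:ℝ) • deltaY i) := rfl

lemma centerY_norm_ge (i : ℕ) (u : X1) : 3 * ‖u‖ ≤ ‖centerY i u‖ := by
  have h : ‖Pu u‖ ≤ ‖centerY i u‖ / 3 := by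
    refine (Pu u).opNorm_le_bound (by positivity) fun z => ?_
    have h1 : ‖centerY i u z‖ = 3 * |Pu u z| := by
      rw [centerY_apply, Y0.norm_smul, Y0.norm_smul, deltaY_norm]
      rw [abs_of_nonneg (by norm_num : (0:ℝ) ≤ 3)]
      ring
    have h2 := (centerY i u).le_opNorm z
    rw [h1] at h2
    rw [Real.norm_eq_abs, div_mul_eq_mul_div, le_div_iff₀ (by norm_num : (0:ℝ) < 3)]
    linarith
  have h2 := Pu_opNorm_ge u
  have h3 : 0 ≤ ‖centerY i u‖ := ContinuousLinearMap.opNorm_nonneg _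
  nlinarith

lemma opNorm_le_of_rows (S : Y0 →L[ℝ] Y0) {r : ℝ} (hr : 0 ≤ r)
    (h : ∀ z m, |(S z) m| ≤ r * ‖z‖) : ‖S‖ ≤ r :=
  S.opNorm_le_bound hr fun z => Y0.norm_le (mul_nonneg hr (norm_nonneg z)) (fun m => h z m)

lemma exists_row (T : Y0 →L[ℝ] Y0) (hT : ‖T‖ = 1) : ∃ i, 1/2 < ‖(coordY i).comp T‖ := by
  by_contra h
  push_neg at h
  have hle : ‖T‖ ≤ 1/2 := by
    refine opNorm_le_of_rows T (by norm_num) fun z m => ?_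
    have h1 : |(T z) m| ≤ ‖(coordY m).comp T‖ * ‖z‖ := by
      simpa [Real.norm_eq_abs] using ((coordY m).comp T).le_opNorm z
    nlinarith [norm_nonneg z, h m]
  rw [hT] at hle; norm_num at hle



lemma c0_half : HasBCP (Y0 →L[ℝ] Y0) := by
  classical
  set D : Set X1 := {u | (∃ q, u = fsq q) ∧ 3/8 < ‖u‖} with hD
  have hDc : D.Countable :=
    (Set.countable_range fsq).mono (fun u hu => by obtain ⟨⟨q, rfl⟩, _⟩ := hu; exact ⟨q, rfl⟩)
  have hDne : D.Nonempty := by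
    refine ⟨fsq (Finsupp.single 0 1), ⟨_, rfl⟩, ?_⟩
    have h1 : ‖fsq (Finsupp.single 0 1)‖ = 1 := by
      rw [X1.norm_eq]
      rw [tsum_eq_single 0 (fun j hj => by simp [Finsupp.single_apply, hj, Ne.symm hj])]
      simp
    rw [h1]; norm_num
  have : Countable D := hDc.to_subtype
  have : Nonempty D := hDne.to_subtype
  refine bcp_aux (ι := ℕ × D) (fun i => centerY i.1 i.2.1)
    (fun i => 3 * ‖i.2.1‖ - 1/8) (fun i => ?_) ?_
  · obtain ⟨k, u, hu⟩ := i
    constructor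
    · have := hu.2; linarith
    · have := centerY_norm_ge k u; linarith
  · intro T hT
    have hT : ‖T‖ = 1 :=
      (mem_sphere_zero_iff_norm (E := Y0 →L[ℝ] Y0)).mp hT
    obtain ⟨i, hi⟩ := exists_row T hT
    obtain ⟨A, hArep, hAle⟩ := rep_lemma ((coordY i).comp T)
    have hAge : ‖(coordY i).comp T‖ ≤ ‖A‖ := by
      refine ContinuousLinearMap.opNorm_le_bound _ (norm_nonneg A) fun z => ?_
      rw [hArep z, Pu_apply, Real.norm_eq_abs]
      exact pair_bound A z
    obtain ⟨q, hq⟩ := fsq_dense A (by norm_num : (0:ℝ) < 1/8)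
    set u := fsq q with hu
    have hun : 3/8 < ‖u‖ := by
      have h1 := norm_sub_norm_le A u
      linarith
    refine Set.mem_iUnion.2 ⟨(i, ⟨u, ⟨q, rfl⟩, hun⟩), ?_⟩
    refine (mem_closedBall_iff_norm (E := Y0 →L[ℝ] Y0)).mpr ?_
    refine opNorm_le_of_rows _ (by linarith) fun z m => ?_
    have hcoord : ((T - centerY i u) z) m
        = (T z) m - (Pu u z) * (3 * (if m = i then 1 else 0)) := by
      rw [ContinuousLinearMap.sub_apply, ZeroAtInftyContinuousMap.coe_sub, Pi.sub_apply,
        centerY_apply]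
      rfl
    rcases eq_or_ne m i with rfl | hm
    · rw [hcoord, if_pos rfl, mul_one]
      have h1 : (T z) m = Pu A z := by
        have := hArep z
        simpa [ContinuousLinearMap.comp_apply] using this
      rw [h1]
      have h2 : |Pu A z - Pu u z| ≤ 1/8 * ‖z‖ := by
        rw [Pu_sub_apply, Pu_apply]
        refine (pair_bound (A - u) z).trans ?_
        exact mul_le_mul_of_nonneg_right (le_of_lt hq) (norm_nonneg z)
      have h3 : |Pu u z| ≤ ‖u‖ * ‖z‖ := by rw [Pu_apply]; exact pair_bound u z
      have h4 : |Pu A z - Pu u z * 3| ≤ |Pu A z - Pu u z| + 2 * |Pu u z| := by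
        have h5 : Pu A z - Pu u z * 3 = (Pu A z - Pu u z) - 2 * (Pu u z) := by ring
        rw [h5]
        calc |(Pu A z - Pu u z) - 2 * (Pu u z)|
            ≤ |Pu A z - Pu u z| + |2 * (Pu u z)| := abs_sub _ _
          _ = |Pu A z - Pu u z| + 2 * |Pu u z| := by rw [abs_mul, abs_two]
      nlinarith [norm_nonneg z]
    · rw [hcoord]
      simp only [if_neg hm, mul_zero, sub_zero]
      have h1 : |(T z) m| ≤ ‖T z‖ := Y0.abs_apply_le (T z) m
      have h2 : ‖T z‖ ≤ ‖z‖ := by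
        have := T.le_opNorm z
        rwa [hT, one_mul] at this
      nlinarith [norm_nonneg z]

end BCPProof

theorem bcp_operators_on_l1_and_c0 :
    HasBCP ((lp (fun _ : ℕ => ℝ) 1) →L[ℝ] (lp (fun _ : ℕ => ℝ) 1)) ∧
    HasBCP (C₀(ℕ, ℝ) →L[ℝ] C₀(ℕ, ℝ)) := by
  exact ⟨l1_half, c0_half⟩
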